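/- arXiv:2110.03135 — 7 statements merged into one kernel-verified Lean document; each statement's English description precedes it below -/
import Mathlib

section
/- Let ν be a probability measure on a measurable input space 𝒳, let κ and κ̃ be measurable maps (Markov kernels) assigning to each x ∈ 𝒳 probability vectors κ(x) and κ̃(x) on {1,…,K} (the conditional distributions P(Y|x) of the true label and P(Ỹ|x) of the assigned label), and let μ be a Markov kernel from 𝒳 to {1,…,K} × {1,…,K} such that for ν-almost every x the two marginals of μ(x) are κ(x) and κ̃(x). Draw N i.i.d. triples (x_i, y_i, ỹ_i) from the joint law given by x_i ∼ ν and (y_i, ỹ_i) | x_i ∼ μ(x_i). Then for every δ ∈ (0,1), with probability at least 1 − δ, the empirical label noise satisfies (1/N)∑_{i=1}^N 1(ỹ_i ≠ y_i) ≥ ∫_𝒳 ‖κ̃(x) − κ(x)‖_TV dν(x) − √(log(2/δ)/(2N)). -/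
open MeasureTheory ProbabilityTheory

lemma integrable_of_abs_le {α : Type*} [MeasurableSpace α] (m : Measure α) [IsFiniteMeasure m]
    {f : α → ℝ} (hf : AEStronglyMeasurable f m) (C : ℝ) (h : ∀ a, |f a| ≤ C) :
    Integrable f m :=
  (integrable_const C).mono' hf (ae_of_all _ (by simpa [Real.norm_eq_abs] using h))

lemma bernoulli_base_pos {p : ℝ} (hp0 : 0 ≤ p) (hp1 : p ≤ 1) (s : ℝ) :
    0 < 1 + (Real.exp s - 1) * p := by
  have := Real.exp_pos s
  rcases eq_or_lt_of_le hp0 with h | h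
  · nlinarith
  · nlinarith [mul_pos h this]

lemma measure_toReal_eq_sum {α : Type*} [Fintype α] [MeasurableSpace α]
    [MeasurableSingletonClass α] (m : Measure α) [IsFiniteMeasure m] (s : Set α)
    [DecidablePred (· ∈ s)] :
    (m s).toReal = ∑ q : α, if q ∈ s then (m {q}).toReal else 0 := by
  classical
  rw [← Finset.sum_filter]
  have hs : s = ⋃ q ∈ Finset.univ.filter (· ∈ s), ({q} : Set α) := by
    ext a; simp
  have hm : m s = ∑ q ∈ Finset.univ.filter (· ∈ s), m {q} := by
    conv_lhs => rw [hs]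
    refine measure_biUnion_finset ?_ (fun q _ => measurableSet_singleton q)
    intro a _ b hb hab
    simp only [Set.disjoint_singleton]
    exact hab
  rw [hm, ENNReal.toReal_sum (fun a _ => measure_ne_top m _)]

lemma tv_le_coupling {K : ℕ} (m : Measure (Fin K × Fin K)) [IsFiniteMeasure m]
    (κ κt : Fin K → ℝ)
    (hκ : ∀ j, κ j = (m {q | q.1 = j}).toReal)
    (hκt : ∀ j, κt j = (m {q | q.2 = j}).toReal) :
    (1 / 2) * ∑ j, |κt j - κ j| ≤ (m {q | q.2 ≠ q.1}).toReal := by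
  classical
  set w : Fin K × Fin K → ℝ := fun q => (m {q}).toReal with hw_def
  have hw : ∀ q, 0 ≤ w q := fun q => ENNReal.toReal_nonneg
  have hκ' : ∀ j, κ j = ∑ q : Fin K × Fin K, if q.1 = j then w q else 0 := by
    intro j; rw [hκ j, measure_toReal_eq_sum]; rfl
  have hκt' : ∀ j, κt j = ∑ q : Fin K × Fin K, if q.2 = j then w q else 0 := by
    intro j; rw [hκt j, measure_toReal_eq_sum]; rfl
  have htgt : (m {q | q.2 ≠ q.1}).toReal
      = ∑ q : Fin K × Fin K, if q.2 ≠ q.1 then w q else 0 := by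
    rw [measure_toReal_eq_sum]; rfl
  rw [htgt]
  have hstep : ∑ j : Fin K, |κt j - κ j|
      ≤ ∑ q : Fin K × Fin K, if q.2 ≠ q.1 then 2 * w q else 0 := by
    calc ∑ j : Fin K, |κt j - κ j|
        = ∑ j : Fin K, |∑ q : Fin K × Fin K,
            ((if q.2 = j then w q else 0) - (if q.1 = j then w q else 0))| := by
          refine Finset.sum_congr rfl fun j _ => ?_
          rw [hκ' j, hκt' j, Finset.sum_sub_distrib]
      _ ≤ ∑ j : Fin K, ∑ q : Fin K × Fin K,
            |(if q.2 = j then w q else 0) - (if q.1 = j then w q else 0)| :=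
          Finset.sum_le_sum fun j _ => Finset.abs_sum_le_sum_abs _ _
      _ = ∑ q : Fin K × Fin K, ∑ j : Fin K,
            |(if q.2 = j then w q else 0) - (if q.1 = j then w q else 0)| :=
          Finset.sum_comm
      _ ≤ ∑ q : Fin K × Fin K, if q.2 ≠ q.1 then 2 * w q else 0 := by
          refine Finset.sum_le_sum fun q _ => ?_
          by_cases hq : q.2 = q.1
          · simp [hq]
          · have hpt : ∀ j : Fin K,
                |(if q.2 = j then w q else 0) - (if q.1 = j then w q else 0)|
                = (if q.2 = j then w q else 0) + (if q.1 = j then w q else 0) := by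
              intro j
              by_cases h2 : q.2 = j <;> by_cases h1 : q.1 = j
              · exact absurd (h2.trans h1.symm) hq
              · simp [h2, h1, abs_of_nonneg (hw q)]
              · simp [h2, h1, abs_of_nonpos (neg_nonpos.mpr (hw q)), hw q]
              · simp [h2, h1]
            simp only [hpt, Finset.sum_add_distrib]
            rw [Finset.sum_ite_eq Finset.univ q.2 (fun _ => w q),
                Finset.sum_ite_eq Finset.univ q.1 (fun _ => w q)]
            simp [hq]
            ring_nf
            exact le_refl _
  have h2 : ∑ q : Fin K × Fin K, (if q.2 ≠ q.1 then 2 * w q else 0)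
      = 2 * ∑ q : Fin K × Fin K, (if q.2 ≠ q.1 then w q else 0) := by
    rw [Finset.mul_sum]
    refine Finset.sum_congr rfl fun q _ => ?_
    by_cases hq : q.2 = q.1 <;> simp [hq]
  linarith

lemma bernoulli_mgf_le {p : ℝ} (hp0 : 0 ≤ p) (hp1 : p ≤ 1) (s : ℝ) :
    1 + (Real.exp s - 1) * p ≤ Real.exp (s * p + s ^ 2 / 8) := by
  set c : ℝ → ℝ := fun u => 1 + (Real.exp u - 1) * p with hc_def
  have hcpos : ∀ u, 0 < c u := fun u => bernoulli_base_pos hp0 hp1 u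
  have hc : ∀ u, HasDerivAt c (Real.exp u * p) u := by
    intro u
    exact (((Real.hasDerivAt_exp u).sub_const 1).mul_const p).const_add 1
  set g : ℝ → ℝ := fun u => u * p + u ^ 2 / 8 - Real.log (c u) with hg_def
  set g' : ℝ → ℝ := fun u => p + u / 4 - Real.exp u * p / c u with hg'_def
  have hg : ∀ u, HasDerivAt g (g' u) u := by
    intro u
    have h1 : HasDerivAt (fun v : ℝ => v * p + v ^ 2 / 8) (p + 2 * u / 8) u := by
      simpa [Pi.add_def] using ((hasDerivAt_id u).mul_const p).add ((hasDerivAt_pow 2 u).div_const 8)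
    have h2 : HasDerivAt (fun v => Real.log (c v)) (Real.exp u * p / c u) u :=
      (hc u).log (hcpos u).ne'
    exact (h1.sub h2).congr_deriv (by simp only [hg'_def]; ring)
  have hg' : ∀ u, HasDerivAt g'
      (1 / 4 - (Real.exp u * p * c u - Real.exp u * p * (Real.exp u * p)) / c u ^ 2) u := by
    intro u
    have h1 : HasDerivAt (fun v => Real.exp v * p / c v)
        ((Real.exp u * p * c u - Real.exp u * p * (Real.exp u * p)) / c u ^ 2) u := by
      simpa [Pi.div_def] using (((Real.hasDerivAt_exp u).mul_const p).div (hc u) (hcpos u).ne')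
    have h2 : HasDerivAt (fun v : ℝ => p + v / 4) (1 / 4) u := by
      simpa using ((hasDerivAt_id u).div_const 4).const_add p
    exact h2.sub h1
  have hg'mono : Monotone g' := by
    refine monotone_of_deriv_nonneg (fun u => (hg' u).differentiableAt) (fun u => ?_)
    rw [(hg' u).deriv]
    have hcu := hcpos u
    have heu := Real.exp_pos u
    have hkey : (Real.exp u * p * c u - Real.exp u * p * (Real.exp u * p)) / c u ^ 2 ≤ 1 / 4 := by
      rw [div_le_iff₀ (by positivity)]
      have : c u - Real.exp u * p = 1 - p := by simp [hc_def]; ring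
      nlinarith [sq_nonneg (c u - 2 * (Real.exp u * p)), mul_pos heu (hcpos u)]
    linarith
  have hg'0 : g' 0 = 0 := by simp [hg'_def, hc_def]
  have hg0 : g 0 = 0 := by simp [hg_def, hc_def]
  have hgnonneg : ∀ u, 0 ≤ g u := by
    intro u
    rcases le_total 0 u with hu | hu
    · have hmono : MonotoneOn g (Set.Ici 0) := by
        refine monotoneOn_of_deriv_nonneg (convex_Ici 0)
          (fun v _ => (hg v).differentiableAt.continuousAt.continuousWithinAt)
          (fun v hv => (hg v).differentiableAt.differentiableWithinAt) (fun v hv => ?_)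
        rw [(hg v).deriv]
        rw [interior_Ici] at hv
        have := hg'mono (le_of_lt hv)
        rw [hg'0] at this
        linarith
      have := hmono (Set.self_mem_Ici) (Set.mem_Ici.2 hu) hu
      rwa [hg0] at this
    · have hmono : AntitoneOn g (Set.Iic 0) := by
        refine antitoneOn_of_deriv_nonpos (convex_Iic 0)
          (fun v _ => (hg v).differentiableAt.continuousAt.continuousWithinAt)
          (fun v hv => (hg v).differentiableAt.differentiableWithinAt) (fun v hv => ?_)
        rw [(hg v).deriv]
        rw [interior_Iic] at hv
        have := hg'mono (le_of_lt hv)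
        rw [hg'0] at this
        linarith
      have := hmono (Set.mem_Iic.2 hu) (Set.self_mem_Iic) hu
      rwa [hg0] at this
  have hfin := hgnonneg s
  have hlog : Real.log (c s) ≤ s * p + s ^ 2 / 8 := by
    simp only [hg_def] at hfin; linarith
  calc c s = Real.exp (Real.log (c s)) := (Real.exp_log (hcpos s)).symm
    _ ≤ Real.exp (s * p + s ^ 2 / 8) := Real.exp_le_exp.2 hlog


/-- Mismatch between the assigned and true label distributions implies label noise:
if for `ν`-a.e. input `x` the kernel `μ x` is a coupling of the true label distribution
`κ x` and the assigned label distribution `κ̃ x`, and we draw `N` i.i.d. triples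
`(xᵢ, yᵢ, ỹᵢ)` from the joint law `ν ⊗ₘ μ`, then with probability at least `1 - δ` the
empirical label noise is at least the mean total variation distance between `κ̃` and `κ`
minus `√(log(2/δ)/(2N))`. -/
theorem label_noise_of_distribution_mismatch
    {𝒳 : Type*} [MeasurableSpace 𝒳] {K : ℕ}
    (ν : Measure 𝒳) [IsProbabilityMeasure ν]
    (κ κt : 𝒳 → Fin K → ℝ)
    (hκmeas : ∀ j, Measurable fun x => κ x j)
    (hκtmeas : ∀ j, Measurable fun x => κt x j)
    (hκprob : ∀ x, (∀ j, 0 ≤ κ x j) ∧ ∑ j : Fin K, κ x j = 1)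
    (hκtprob : ∀ x, (∀ j, 0 ≤ κt x j) ∧ ∑ j : Fin K, κt x j = 1)
    (μ : Kernel 𝒳 (Fin K × Fin K)) [IsMarkovKernel μ]
    (hmarg : ∀ᵐ x ∂ν,
      (∀ j : Fin K, (μ x).map Prod.fst {j} = ENNReal.ofReal (κ x j)) ∧
      (∀ j : Fin K, (μ x).map Prod.snd {j} = ENNReal.ofReal (κt x j)))
    {Ω : Type*} [MeasureSpace Ω] [IsProbabilityMeasure (ℙ : Measure Ω)]
    {N : ℕ} (hN : 0 < N)
    (T : Fin N → Ω → 𝒳 × (Fin K × Fin K))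
    (hTmeas : ∀ i, Measurable (T i))
    (hTlaw : ∀ i, Measure.map (T i) ℙ = ν.compProd μ)
    (hTindep : iIndepFun T ℙ)
    (δ : ℝ) (hδ : δ ∈ Set.Ioo (0 : ℝ) 1) :
    1 - δ ≤
      (ℙ {ω |
        (∫ x, (1 / 2) * ∑ j : Fin K, |κt x j - κ x j| ∂ν) -
            Real.sqrt (Real.log (2 / δ) / (2 * N)) ≤
          (1 / (N : ℝ)) *
            ∑ i : Fin N, (if (T i ω).2.2 ≠ (T i ω).2.1 then (1 : ℝ) else 0)}).toReal := by
  classical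
  obtain ⟨hδ0, hδ1⟩ := hδ
  have hNR : (0 : ℝ) < N := Nat.cast_pos.mpr hN
  -- the indicator function on the sample space
  set ind : 𝒳 × (Fin K × Fin K) → ℝ :=
    fun z => if z.2.2 ≠ z.2.1 then (1 : ℝ) else 0 with hind_def
  have hDmeas : MeasurableSet {z : 𝒳 × (Fin K × Fin K) | z.2.2 ≠ z.2.1} :=
    measurable_snd ((Set.to_countable {q : Fin K × Fin K | q.2 ≠ q.1}).measurableSet)
  have hindmeas : Measurable ind := Measurable.ite hDmeas measurable_const measurable_const
  have hind01 : ∀ z, 0 ≤ ind z ∧ ind z ≤ 1 := by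
    intro z
    by_cases h : z.2.2 = z.2.1 <;> simp [hind_def, h]
  have hindint : Integrable ind (ν.compProd μ) := by
    refine integrable_of_abs_le _ hindmeas.aestronglyMeasurable 1 (fun z => ?_)
    rw [abs_of_nonneg (hind01 z).1]; exact (hind01 z).2
  set p : ℝ := ∫ z, ind z ∂(ν.compProd μ) with hp_def
  have hp0 : 0 ≤ p := integral_nonneg fun z => (hind01 z).1
  have hp1 : p ≤ 1 := by
    have := integral_mono hindint (integrable_const 1) (fun z => (hind01 z).2)
    simpa using this
  -- the indicator random variables
  set X : Fin N → Ω → ℝ := fun i ω => ind (T i ω) with hX_def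
  have hXmeas : ∀ i, Measurable (X i) := fun i => hindmeas.comp (hTmeas i)
  have hXindep : iIndepFun X ℙ :=
    hTindep.comp (fun _ => ind) (fun _ => hindmeas)
  have hX01 : ∀ i ω, 0 ≤ X i ω ∧ X i ω ≤ 1 := fun i ω => hind01 (T i ω)
  -- mgf of each variable
  have hmgf : ∀ (i : Fin N) (s : ℝ), mgf (X i) ℙ s = 1 + (Real.exp s - 1) * p := by
    intro i s
    have h1 : mgf (X i) ℙ s = ∫ z, Real.exp (s * ind z) ∂(ν.compProd μ) := by
      rw [mgf, ← hTlaw i, integral_map (hTmeas i).aemeasurable]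
      exact ((measurable_const.mul hindmeas).exp).aestronglyMeasurable
    have h2 : ∀ z, Real.exp (s * ind z) = 1 + (Real.exp s - 1) * ind z := by
      intro z
      by_cases h : z.2.2 = z.2.1 <;> simp [hind_def, h]
    rw [h1]
    simp_rw [h2]
    rw [integral_add (integrable_const 1) (hindint.const_mul _), integral_const,
      integral_const_mul]
    simp [hp_def]
  -- Step A: mean TV distance is at most p
  have hTVle : ∀ x, (1 / 2 : ℝ) * ∑ j : Fin K, |κt x j - κ x j| ≤ K := by
    intro x
    have hb : ∀ j : Fin K, |κt x j - κ x j| ≤ 2 := by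
      intro j
      have h1 : κ x j ≤ 1 := by
        rw [← (hκprob x).2]
        exact Finset.single_le_sum (fun k _ => (hκprob x).1 k) (Finset.mem_univ j)
      have h2 : κt x j ≤ 1 := by
        rw [← (hκtprob x).2]
        exact Finset.single_le_sum (fun k _ => (hκtprob x).1 k) (Finset.mem_univ j)
      have h3 := (hκprob x).1 j
      have h4 := (hκtprob x).1 j
      rw [abs_le]; constructor <;> linarith
    have := Finset.sum_le_sum (fun j (_ : j ∈ Finset.univ) => hb j)
    simp only [Finset.sum_const, Finset.card_univ, Fintype.card_fin, nsmul_eq_mul] at this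
    linarith
  have hTVnonneg : ∀ x, 0 ≤ (1 / 2 : ℝ) * ∑ j : Fin K, |κt x j - κ x j| := by
    intro x
    have : 0 ≤ ∑ j : Fin K, |κt x j - κ x j| :=
      Finset.sum_nonneg fun j _ => abs_nonneg _
    linarith
  have hTVmeas : Measurable fun x => (1 / 2 : ℝ) * ∑ j : Fin K, |κt x j - κ x j| := by
    refine Measurable.const_mul ?_ _
    exact Finset.measurable_sum _ fun j _ => ((hκtmeas j).sub (hκmeas j)).abs
  have hTVint : Integrable (fun x => (1 / 2 : ℝ) * ∑ j : Fin K, |κt x j - κ x j|) ν := by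
    refine integrable_of_abs_le _ hTVmeas.aestronglyMeasurable K (fun x => ?_)
    rw [abs_of_nonneg (hTVnonneg x)]; exact hTVle x
  have hRmeas : Measurable fun x => (μ x {q : Fin K × Fin K | q.2 ≠ q.1}).toReal :=
    (μ.measurable_coe ((Set.to_countable _).measurableSet)).ennreal_toReal
  have hRbound : ∀ x, (μ x {q : Fin K × Fin K | q.2 ≠ q.1}).toReal ≤ 1 := by
    intro x
    have h := measure_mono (Set.subset_univ {q : Fin K × Fin K | q.2 ≠ q.1}) (μ := μ x)
    calc (μ x {q : Fin K × Fin K | q.2 ≠ q.1}).toReal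
        ≤ (μ x Set.univ).toReal := ENNReal.toReal_mono (measure_ne_top _ _) h
      _ = 1 := by simp
  have hRint : Integrable (fun x => (μ x {q : Fin K × Fin K | q.2 ≠ q.1}).toReal) ν := by
    refine integrable_of_abs_le _ hRmeas.aestronglyMeasurable 1 (fun x => ?_)
    rw [abs_of_nonneg ENNReal.toReal_nonneg]; exact hRbound x
  have hae : ∀ᵐ x ∂ν, (1 / 2 : ℝ) * ∑ j : Fin K, |κt x j - κ x j|
      ≤ (μ x {q : Fin K × Fin K | q.2 ≠ q.1}).toReal := by
    filter_upwards [hmarg] with x hx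
    refine tv_le_coupling (μ x) (κ x) (κt x) ?_ ?_
    · intro j
      have h := hx.1 j
      rw [Measure.map_apply measurable_fst (measurableSet_singleton j)] at h
      have h' : μ x {q : Fin K × Fin K | q.1 = j} = ENNReal.ofReal (κ x j) := h
      rw [h', ENNReal.toReal_ofReal ((hκprob x).1 j)]
    · intro j
      have h := hx.2 j
      rw [Measure.map_apply measurable_snd (measurableSet_singleton j)] at h
      have h' : μ x {q : Fin K × Fin K | q.2 = j} = ENNReal.ofReal (κt x j) := h
      rw [h', ENNReal.toReal_ofReal ((hκtprob x).1 j)]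
  have hinner : ∀ x, (∫ q, ind (x, q) ∂(μ x))
      = (μ x {q : Fin K × Fin K | q.2 ≠ q.1}).toReal := by
    intro x
    have heq : (fun q : Fin K × Fin K => ind (x, q))
        = Set.indicator {q : Fin K × Fin K | q.2 ≠ q.1} (fun _ => (1 : ℝ)) := by
      funext q
      by_cases h : q.2 = q.1 <;> simp [hind_def, h, Set.indicator_apply]
    rw [heq, integral_indicator_const (1 : ℝ) ((Set.to_countable _).measurableSet),
      smul_eq_mul, mul_one, measureReal_def]
  have hIp : (∫ x, (1 / 2 : ℝ) * ∑ j : Fin K, |κt x j - κ x j| ∂ν) ≤ p := by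
    have hrepr : p = ∫ x, (∫ q, ind (x, q) ∂(μ x)) ∂ν := by
      rw [hp_def, Measure.integral_compProd hindint]
    rw [hrepr]
    simp_rw [hinner]
    exact integral_mono_ae hTVint hRint hae
  -- constants
  set t : ℝ := Real.sqrt (Real.log (2 / δ) / (2 * N)) with ht_def
  have hlog0 : 0 ≤ Real.log (2 / δ) := by
    refine Real.log_nonneg ?_
    rw [le_div_iff₀ hδ0]; linarith
  have ht0 : 0 ≤ t := Real.sqrt_nonneg _
  have htsq : t ^ 2 = Real.log (2 / δ) / (2 * N) := by
    rw [ht_def, Real.sq_sqrt (by positivity)]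
  set s : ℝ := -(4 * t) with hs_def
  have hs0 : s ≤ 0 := by simp [hs_def]; positivity
  -- Chernoff bound
  have hSfun : (∑ i : Fin N, X i) = fun ω => ∑ i : Fin N, X i ω := by
    funext ω; simp [Finset.sum_apply]
  have hSmeas : Measurable (∑ i : Fin N, X i) := by
    rw [hSfun]; exact Finset.measurable_sum _ fun i _ => hXmeas i
  have hSapply : ∀ ω, (∑ i : Fin N, X i) ω = ∑ i : Fin N, X i ω := by
    intro ω; simp [Finset.sum_apply]
  have hintExp : Integrable (fun ω => Real.exp (s * (∑ i : Fin N, X i) ω)) ℙ := by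
    refine integrable_of_abs_le _ ((hSmeas.const_mul s).exp).aestronglyMeasurable
      (Real.exp (|s| * N)) (fun ω => ?_)
    rw [abs_of_nonneg (Real.exp_pos _).le, Real.exp_le_exp]
    have h1 : 0 ≤ (∑ i : Fin N, X i) ω := by
      rw [hSapply]; exact Finset.sum_nonneg fun i _ => (hX01 i ω).1
    have h2 : (∑ i : Fin N, X i) ω ≤ N := by
      rw [hSapply]
      calc ∑ i : Fin N, X i ω ≤ ∑ _i : Fin N, (1 : ℝ) :=
            Finset.sum_le_sum fun i _ => (hX01 i ω).2
        _ = N := by simp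
    calc s * (∑ i : Fin N, X i) ω ≤ |s| * (∑ i : Fin N, X i) ω :=
          mul_le_mul_of_nonneg_right (le_abs_self s) h1
      _ ≤ |s| * N := mul_le_mul_of_nonneg_left h2 (abs_nonneg s)
  have hmgfS : mgf (∑ i : Fin N, X i) ℙ s = (1 + (Real.exp s - 1) * p) ^ N := by
    rw [hXindep.mgf_sum hXmeas Finset.univ]
    simp [hmgf, Finset.prod_const, Finset.card_univ]
  have hcher := measure_le_le_exp_mul_mgf (μ := ℙ) (X := ∑ i : Fin N, X i)
    (N * (p - t)) hs0 hintExp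
  have hbound : (ℙ {ω | (∑ i : Fin N, X i) ω ≤ N * (p - t)}).toReal ≤ δ / 2 := by
    have hstep1 : Real.exp (-s * (N * (p - t))) * mgf (∑ i : Fin N, X i) ℙ s
        ≤ Real.exp (-s * (N * (p - t))) * (Real.exp (s * p + s ^ 2 / 8)) ^ N := by
      rw [hmgfS]
      refine mul_le_mul_of_nonneg_left ?_ (Real.exp_pos _).le
      exact pow_le_pow_left₀ (bernoulli_base_pos hp0 hp1 s).le (bernoulli_mgf_le hp0 hp1 s) N
    have hstep2 : Real.exp (-s * (N * (p - t))) * (Real.exp (s * p + s ^ 2 / 8)) ^ N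
        = Real.exp (-s * (N * (p - t)) + N * (s * p + s ^ 2 / 8)) := by
      rw [← Real.exp_nat_mul, ← Real.exp_add]
    have hstep3 : -s * (N * (p - t)) + N * (s * p + s ^ 2 / 8) = -(2 * N * t ^ 2) := by
      rw [hs_def]; ring
    have hstep4 : -(2 * N * t ^ 2) = -Real.log (2 / δ) := by
      rw [htsq]; field_simp
    have hstep5 : Real.exp (-Real.log (2 / δ)) = δ / 2 := by
      rw [Real.exp_neg, Real.exp_log (by positivity), inv_div]
    calc (ℙ {ω | (∑ i : Fin N, X i) ω ≤ N * (p - t)}).toReal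
        ≤ Real.exp (-s * (N * (p - t))) * mgf (∑ i : Fin N, X i) ℙ s := hcher
      _ ≤ Real.exp (-s * (N * (p - t))) * (Real.exp (s * p + s ^ 2 / 8)) ^ N := hstep1
      _ = δ / 2 := by rw [hstep2, hstep3, hstep4, hstep5]
  -- final assembly
  set I : ℝ := ∫ x, (1 / 2 : ℝ) * ∑ j : Fin K, |κt x j - κ x j| ∂ν with hI_def
  set E : Set Ω := {ω | I - t ≤ (1 / (N : ℝ)) * ∑ i : Fin N, X i ω} with hE_def
  have hEmeas : MeasurableSet E := by
    refine measurableSet_le measurable_const ?_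
    exact (Finset.measurable_sum _ fun i _ => hXmeas i).const_mul _
  have hsub : Eᶜ ⊆ {ω | (∑ i : Fin N, X i) ω ≤ N * (p - t)} := by
    intro ω hω
    simp only [hE_def, Set.mem_compl_iff, Set.mem_setOf_eq, not_le] at hω
    simp only [Set.mem_setOf_eq, hSapply]
    have h1 : (1 / (N : ℝ)) * ∑ i : Fin N, X i ω < p - t := lt_of_lt_of_le hω (by linarith)
    have h2 : ∑ i : Fin N, X i ω = N * ((1 / (N : ℝ)) * ∑ i : Fin N, X i ω) := by
      field_simp
    rw [h2]
    exact le_of_lt (by exact mul_lt_mul_of_pos_left h1 hNR)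
  have hcompl : (ℙ Eᶜ).toReal ≤ δ / 2 :=
    le_trans (ENNReal.toReal_mono (measure_ne_top _ _) (measure_mono hsub)) hbound
  have hsum1 : (ℙ E).toReal + (ℙ Eᶜ).toReal = 1 := by
    rw [← ENNReal.toReal_add (measure_ne_top _ _) (measure_ne_top _ _),
      measure_add_measure_compl hEmeas, measure_univ, ENNReal.toReal_one]
  have hfinal : 1 - δ ≤ (ℙ E).toReal := by linarith
  exact hfinal
end

section
/- Let f : ℝ^d → ℝ be L-Lipschitz with respect to the ℓ2 norm (L > 0), let x, x* ∈ ℝ^d with f(x*) = 1 and f(x) ≤ 1, and suppose there exists a linear map H : ℝ^d → ℝ^d (a Hessian ∇²f(z) at some intermediate point z) such that ∇f(x) = H(x − x*) and ‖Hv‖₂ ≥ σ_m ‖v‖₂ for all v ∈ ℝ^d, where σ_m > 0. Then ‖∇f(x)‖₂ ≥ (σ_m/L)(1 − f(x)). -/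
/-- Gradient-norm lower bound: if `f` is `L`-Lipschitz, attains the value `1` at `x*`, and the
gradient of `f` at `x` is the image of `x - x*` under a linear map `H` whose singular values
are bounded below by `σm > 0`, then `‖∇f(x)‖₂ ≥ (σm/L)(1 - f(x))`. -/
theorem gradient_norm_lower_bound {d : ℕ}
    (f : EuclideanSpace ℝ (Fin d) → ℝ) (L : ℝ) (hL : 0 < L)
    (hLip : ∀ a b, |f a - f b| ≤ L * ‖a - b‖)
    (x xstar : EuclideanSpace ℝ (Fin d))
    (hxstar : f xstar = 1) (hfx : f x ≤ 1)
    (H : EuclideanSpace ℝ (Fin d) →L[ℝ] EuclideanSpace ℝ (Fin d))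
    (σm : ℝ) (hσm : 0 < σm)
    (hgrad : gradient f x = H (x - xstar))
    (hHlow : ∀ v, σm * ‖v‖ ≤ ‖H v‖) :
    σm / L * (1 - f x) ≤ ‖gradient f x‖ := by
  have h1 : 1 - f x ≤ L * ‖x - xstar‖ := by
    have := hLip xstar x
    rw [hxstar] at this
    have h2 : 1 - f x ≤ |1 - f x| := le_abs_self _
    have h3 : ‖xstar - x‖ = ‖x - xstar‖ := norm_sub_rev _ _
    rw [h3] at this
    linarith [abs_nonneg (1 - f x), this, h2]
  have h4 : σm * ‖x - xstar‖ ≤ ‖gradient f x‖ := by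
    rw [hgrad]; exact hHlow _
  have h5 : σm / L * (1 - f x) ≤ σm / L * (L * ‖x - xstar‖) :=
    mul_le_mul_of_nonneg_left h1 (by positivity)
  calc σm / L * (1 - f x) ≤ σm / L * (L * ‖x - xstar‖) := h5
    _ = σm * ‖x - xstar‖ := by field_simp
    _ ≤ ‖gradient f x‖ := h4
end

section
/- Let f : ℝ^d → ℝ^K be such that f(w) is a probability vector on {1,…,K} for every w and each coordinate f(·)_j is twice continuously differentiable. Fix an input x, a class y, ε > 0, and constants 0 < σ_m ≤ σ_M, L > 0. Assume: (i) ‖∇²f(w)_y‖_op ≤ σ_M for every w; (ii) f(·)_y is L-Lipschitz with respect to the ℓ2 norm; (iii) ∇f(x)_y ≠ 0; (iv) there exist x* with f(x*)_y = 1 and a point z such that ∇f(x)_y = ∇²f(z)_y (x − x*) with ‖∇²f(z)_y v‖₂ ≥ σ_m ‖v‖₂ for all v. Let x' = x + δ with δ = −ε ∇f(x)_y/‖∇f(x)_y‖₂. Then the total variation distance between the label distributions at x and x' satisfies (1/2)∑_{j=1}^K |f(x)_j − f(x')_j| ≥ (ε/2)(1 − f(x)_y) σ_m/L − (ε²/4)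 σ_M. -/
open Finset

/-- Descent lemma: a `C²` function with Hessian bounded in operator norm by `σM`
satisfies the quadratic upper bound `g (x + δ) ≤ g x + ⟨∇g x, δ⟩ + (σM/2)‖δ‖²`. -/
lemma quad_upper_bound_aux {E : Type*} [NormedAddCommGroup E] [NormedSpace ℝ E]
    (g : E → ℝ) (hg : ContDiff ℝ 2 g) (σM : ℝ)
    (hH : ∀ w, ‖iteratedFDeriv ℝ 2 g w‖ ≤ σM) (x δ : E) :
    g (x + δ) ≤ g x + fderiv ℝ g x δ + σM / 2 * ‖δ‖ ^ 2 := by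
  have hdiff : Differentiable ℝ g := hg.differentiable (by norm_num)
  have hdf : Differentiable ℝ (fderiv ℝ g) :=
    (hg.fderiv_right (m := 1) (by norm_num)).differentiable (by norm_num)
  have hbound : ∀ w, ‖fderiv ℝ (fderiv ℝ g) w‖ ≤ σM := by
    intro w
    have h1 : ‖fderiv ℝ (fderiv ℝ g) w‖ = ‖iteratedFDeriv ℝ 2 g w‖ := by
      rw [← norm_iteratedFDeriv_fderiv (n := 1), ← norm_iteratedFDeriv_fderiv (n := 0),
        norm_iteratedFDeriv_zero]
    rw [h1]; exact hH w
  have hlipD : ∀ a b : E, ‖fderiv ℝ g a - fderiv ℝ g b‖ ≤ σM * ‖a - b‖ := fun a b =>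
    Convex.norm_image_sub_le_of_norm_fderiv_le (fun w _ => (hdf w))
      (fun w _ => hbound w) convex_univ trivial trivial
  have hφ : ∀ t : ℝ, HasDerivAt (fun t : ℝ => g (x + t • δ)) (fderiv ℝ g (x + t • δ) δ) t := by
    intro t
    have hline : HasDerivAt (fun t : ℝ => x + t • δ) δ t := by
      simpa using (((hasDerivAt_id t).smul_const δ).const_add x)
    exact ((hdiff (x + t • δ)).hasFDerivAt).comp_hasDerivAt t hline
  set c : ℝ := fderiv ℝ g x δ with hc
  set ψ : ℝ → ℝ := fun t => g (x + t • δ) - t * c - σM * ‖δ‖ ^ 2 * t ^ 2 / 2 with hψ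
  have hψ' : ∀ t : ℝ, HasDerivAt ψ
      (fderiv ℝ g (x + t • δ) δ - c - σM * ‖δ‖ ^ 2 * t) t := by
    intro t
    have h1 : HasDerivAt (fun t : ℝ => t * c) c t := hasDerivAt_mul_const c
    have h2 : HasDerivAt (fun t : ℝ => σM * ‖δ‖ ^ 2 * t ^ 2 / 2) (σM * ‖δ‖ ^ 2 * t) t := by
      have := ((hasDerivAt_pow 2 t).const_mul (σM * ‖δ‖ ^ 2)).div_const 2
      exact this.congr_deriv (by ring)
    exact ((hφ t).sub h1).sub h2
  have key : ψ 1 ≤ ψ 0 := by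
    have hanti : AntitoneOn ψ (Set.Icc 0 1) := by
      apply antitoneOn_of_deriv_nonpos (convex_Icc 0 1)
      · exact fun t _ => ((hψ' t).continuousAt).continuousWithinAt
      · exact fun t _ => ((hψ' t).differentiableAt).differentiableWithinAt
      · intro t ht
        rw [interior_Icc] at ht
        rw [(hψ' t).deriv]
        have h3 : fderiv ℝ g (x + t • δ) δ - c ≤ σM * ‖δ‖ ^ 2 * t := by
          have h4 : fderiv ℝ g (x + t • δ) δ - c =
              (fderiv ℝ g (x + t • δ) - fderiv ℝ g x) δ := by
            simp [hc]
          rw [h4]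
          calc (fderiv ℝ g (x + t • δ) - fderiv ℝ g x) δ
              ≤ ‖(fderiv ℝ g (x + t • δ) - fderiv ℝ g x) δ‖ := le_abs_self _
            _ ≤ ‖fderiv ℝ g (x + t • δ) - fderiv ℝ g x‖ * ‖δ‖ :=
                (fderiv ℝ g (x + t • δ) - fderiv ℝ g x).le_opNorm δ
            _ ≤ (σM * ‖x + t • δ - x‖) * ‖δ‖ := by
                gcongr; exact hlipD _ _
            _ = σM * ‖δ‖ ^ 2 * t := by
                have : ‖x + t • δ - x‖ = t * ‖δ‖ := by
                  rw [add_sub_cancel_left, norm_smul, Real.norm_eq_abs,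
                    abs_of_pos ht.1]
                rw [this]; ring
        linarith
    exact hanti (Set.mem_Icc.2 ⟨le_rfl, zero_le_one⟩)
      (Set.mem_Icc.2 ⟨zero_le_one, le_rfl⟩) zero_le_one
  have h0 : ψ 0 = g x := by simp [hψ]
  have h1 : ψ 1 = g (x + δ) - c - σM * ‖δ‖ ^ 2 / 2 := by simp [hψ]
  rw [h0, h1] at key
  nlinarith [key]

/-- Adversarial perturbation causes distribution mismatch: under the curvature, Lipschitz and
gradient assumptions, the total variation distance between the true label distributions
`f(x)` and `f(x')` at a clean input `x` and its FGSM adversarial example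
`x' = x - ε ∇f(x)_y/‖∇f(x)_y‖₂` is at least `(ε/2)(1 - f(x)_y) σm/L - (ε²/4) σM`. -/
theorem distribution_mismatch_lower_bound {d K : ℕ}
    (f : EuclideanSpace ℝ (Fin d) → Fin K → ℝ)
    (hprob : ∀ w, (∀ j, 0 ≤ f w j) ∧ ∑ j : Fin K, f w j = 1)
    (hsmooth : ∀ j : Fin K, ContDiff ℝ 2 fun w => f w j)
    (x : EuclideanSpace ℝ (Fin d)) (y : Fin K)
    (ε σm σM L : ℝ) (hε : 0 < ε) (hσm : 0 < σm) (hσmM : σm ≤ σM) (hL : 0 < L)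
    (hHess : ∀ w, ‖iteratedFDeriv ℝ 2 (fun u => f u y) w‖ ≤ σM)
    (hLip : ∀ a b, |f a y - f b y| ≤ L * ‖a - b‖)
    (hgrad : gradient (fun w => f w y) x ≠ 0)
    (hstruct : ∃ xstar z : EuclideanSpace ℝ (Fin d),
      f xstar y = 1 ∧
      gradient (fun w => f w y) x =
        (fderiv ℝ (fun w => gradient (fun u => f u y) w) z) (x - xstar) ∧
      ∀ v, σm * ‖v‖ ≤ ‖(fderiv ℝ (fun w => gradient (fun u => f u y) w) z) v‖) :
    ε / 2 * (1 - f x y) * (σm / L) - ε ^ 2 / 4 * σM ≤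
      (1 / 2) * ∑ j : Fin K,
        |f x j -
          f (x + (-(ε / ‖gradient (fun w => f w y) x‖)) •
            gradient (fun w => f w y) x) j| := by
  classical
  set g : EuclideanSpace ℝ (Fin d) → ℝ := fun w => f w y with hgdef
  set G : EuclideanSpace ℝ (Fin d) := gradient (fun w => f w y) x with hGdef
  set δ : EuclideanSpace ℝ (Fin d) := (-(ε / ‖G‖)) • G with hδdef
  have hGn : (0 : ℝ) < ‖G‖ := norm_pos_iff.2 hgrad
  have hcd : ContDiff ℝ 2 g := hsmooth y
  have hdiff : Differentiable ℝ g := hcd.differentiable (by norm_num)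
  have hδnorm : ‖δ‖ = ε := by
    rw [hδdef, norm_smul, Real.norm_eq_abs, abs_neg, abs_of_pos (div_pos hε hGn)]
    field_simp
  -- the derivative in the direction δ
  have hfd : fderiv ℝ g x = InnerProductSpace.toDual ℝ _ G :=
    ((hdiff x).hasGradientAt.hasFDerivAt).fderiv
  have hcval : fderiv ℝ g x δ = -(ε * ‖G‖) := by
    rw [hfd]
    rw [InnerProductSpace.toDual_apply_apply, hδdef, real_inner_smul_right,
      real_inner_self_eq_norm_sq]
    field_simp
  -- descent lemma
  have hquad : g (x + δ) ≤ g x + fderiv ℝ g x δ + σM / 2 * ‖δ‖ ^ 2 :=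
    quad_upper_bound_aux g hcd σM hHess x δ
  rw [hcval, hδnorm] at hquad
  -- structural lower bound on ‖G‖
  obtain ⟨xstar, z, hxstar, hGeq, hσ⟩ := hstruct
  have hGlow : σm * ‖x - xstar‖ ≤ ‖G‖ := by
    rw [hGeq]; exact hσ _
  have hdist : 1 - g x ≤ L * ‖x - xstar‖ := by
    have := hLip xstar x
    rw [hxstar] at this
    calc 1 - g x ≤ |1 - g x| := le_abs_self _
      _ ≤ L * ‖xstar - x‖ := this
      _ = L * ‖x - xstar‖ := by rw [norm_sub_rev]
  have hgx_le : g x ≤ 1 := by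
    have hp := hprob x
    calc g x ≤ ∑ j : Fin K, f x j :=
          Finset.single_le_sum (fun j _ => hp.1 j) (Finset.mem_univ y)
      _ = 1 := hp.2
  -- combine: σm * (1 - g x) / L ≤ ‖G‖
  have hkey : σm * (1 - g x) / L ≤ ‖G‖ := by
    have h1 : σm * (1 - g x) / L ≤ σm * ‖x - xstar‖ := by
      rw [div_le_iff₀ hL]
      have := mul_le_mul_of_nonneg_left hdist (le_of_lt hσm)
      nlinarith
    linarith
  -- lower bound the y-term of the sum
  have hterm : ε * (σm * (1 - g x) / L) - σM / 2 * ε ^ 2 ≤ |f x y - f (x + δ) y| := by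
    have h2 : ε * (σm * (1 - g x) / L) ≤ ε * ‖G‖ :=
      mul_le_mul_of_nonneg_left hkey (le_of_lt hε)
    have h3 : g x - g (x + δ) ≤ |f x y - f (x + δ) y| := le_abs_self _
    simp only [hgdef] at hquad h3 ⊢
    linarith
  have hsum : |f x y - f (x + δ) y| ≤ ∑ j : Fin K, |f x j - f (x + δ) j| :=
    Finset.single_le_sum (f := fun j => |f x j - f (x + δ) j|) (fun j _ => abs_nonneg _) (Finset.mem_univ y)
  have hfinal : ε * (σm * (1 - g x) / L) - σM / 2 * ε ^ 2 ≤
      ∑ j : Fin K, |f x j - f (x + δ) j| := le_trans hterm hsum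
  have heq : ε / 2 * (1 - f x y) * (σm / L) - ε ^ 2 / 4 * σM =
      (1 / 2) * (ε * (σm * (1 - f x y) / L) - σM / 2 * ε ^ 2) := by ring
  rw [heq]
  have : (0:ℝ) < 2 := by norm_num
  calc (1 / 2 : ℝ) * (ε * (σm * (1 - f x y) / L) - σM / 2 * ε ^ 2)
      ≤ (1 / 2) * ∑ j : Fin K, |f x j - f (x + δ) j| := by
        apply mul_le_mul_of_nonneg_left _ (by norm_num)
        exact hfinal
    _ = (1 / 2) * ∑ j : Fin K,
        |f x j - f (x + (-(ε / ‖gradient (fun w => f w y) x‖)) •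
          gradient (fun w => f w y) x) j| := by rw [hδdef, hGdef]
end

section
/- Let f : ℝ^d → ℝ^K be such that f(w) is a probability vector on {1,…,K} for every w and each coordinate f(·)_j is twice continuously differentiable, with ‖∇²f(w)_y‖_op ≤ σ_M for every w for a fixed class y. Let x ∈ ℝ^d with ∇f(x)_y ≠ 0, let ε > 0, and set δ = −ε ∇f(x)_y/‖∇f(x)_y‖₂ and x' = x + δ. Then (1/2)∑_{j=1}^K |f(x)_j − f(x')_j| ≥ (1/2)[ε ‖∇f(x)_y‖₂ − (σ_M/2) ε²]. -/
open Finset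

set_option linter.unusedSectionVars false

section Aux
open Set
variable {E : Type*} [NormedAddCommGroup E] [InnerProductSpace ℝ E] [CompleteSpace E]

/-- Quadratic upper Taylor bound for a C² function with Hessian norm bounded by σ. -/
theorem quad_upper_bound (g : E → ℝ) (hg : ContDiff ℝ 2 g) (σ : ℝ)
    (hH : ∀ w, ‖iteratedFDeriv ℝ 2 g w‖ ≤ σ) (x δ : E) :
    g (x + δ) ≤ g x + fderiv ℝ g x δ + σ * ‖δ‖ ^ 2 / 2 := by
  -- bound on second fderiv
  have hfd2 : ∀ w, ‖fderiv ℝ (fderiv ℝ g) w‖ ≤ σ := by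
    intro w
    have hσ0 : 0 ≤ σ := (norm_nonneg _).trans (hH w)
    refine ContinuousLinearMap.opNorm_le_bound _ hσ0 fun v => ?_
    refine ContinuousLinearMap.opNorm_le_bound _ (by positivity) fun u => ?_
    have := (iteratedFDeriv ℝ 2 g w).le_opNorm ![v, u]
    have h2 : iteratedFDeriv ℝ 2 g w ![v, u] = fderiv ℝ (fderiv ℝ g) w v u := by
      rw [iteratedFDeriv_two_apply]; rfl
    rw [h2] at this
    calc |fderiv ℝ (fderiv ℝ g) w v u| ≤ ‖iteratedFDeriv ℝ 2 g w‖ * ∏ i, ‖(![v, u]) i‖ := this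
      _ ≤ σ * (‖v‖ * ‖u‖) := by
          rw [Fin.prod_univ_two]
          exact mul_le_mul (hH w) (le_refl _) (by positivity) hσ0
      _ = σ * ‖v‖ * ‖u‖ := by ring
  have hdg : Differentiable ℝ g := hg.differentiable (by norm_num)
  have hdg' : Differentiable ℝ (fderiv ℝ g) :=
    (hg.fderiv_right (m := 1) (by norm_num)).differentiable (by norm_num)
  -- Lipschitz of fderiv g
  have hlip : ∀ a b : E, ‖fderiv ℝ g a - fderiv ℝ g b‖ ≤ σ * ‖a - b‖ := by
    intro a b
    exact convex_univ.norm_image_sub_le_of_norm_fderiv_le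
      (fun w _ => hdg' w) (fun w _ => hfd2 w) (mem_univ b) (mem_univ a)
  set c : ℝ := fderiv ℝ g x δ with hc
  set a : ℝ := σ * ‖δ‖ ^ 2 with ha
  set χ : ℝ → ℝ := fun t => g (x + t • δ) - t * c - a / 2 * t ^ 2 with hχ
  have hL : ∀ t : ℝ, HasDerivAt (fun s : ℝ => x + s • δ) δ t := fun t => by
    simpa using ((hasDerivAt_id t).smul_const δ).const_add x
  have hφ : ∀ t : ℝ, HasDerivAt (fun s => g (x + s • δ)) (fderiv ℝ g (x + t • δ) δ) t :=
    fun t => (hdg (x + t • δ)).hasFDerivAt.comp_hasDerivAt t (hL t)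
  have hχ' : ∀ t : ℝ, HasDerivAt χ (fderiv ℝ g (x + t • δ) δ - c - a * t) t := by
    intro t
    have h1 : HasDerivAt (fun s : ℝ => s * c) c t := by
      simpa using (hasDerivAt_id t).mul_const c
    have h2 : HasDerivAt (fun s : ℝ => a / 2 * s ^ 2) (a / 2 * (2 * t)) t := by
      simpa using (hasDerivAt_pow 2 t).const_mul (a / 2)
    have := ((hφ t).sub h1).sub h2
    refine this.congr_deriv ?_
    ring
  have hanti : AntitoneOn χ (Ici (0 : ℝ)) := by
    apply antitoneOn_of_deriv_nonpos (convex_Ici 0)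
    · exact fun t _ => ((hχ' t).continuousAt).continuousWithinAt
    · exact fun t _ => ((hχ' t).differentiableAt).differentiableWithinAt
    · intro t ht
      rw [interior_Ici] at ht
      rw [(hχ' t).deriv]
      have hb : fderiv ℝ g (x + t • δ) δ - c ≤ a * t := by
        have h1 : fderiv ℝ g (x + t • δ) δ - c = (fderiv ℝ g (x + t • δ) - fderiv ℝ g x) δ := by
          simp [hc]
        rw [h1]
        calc (fderiv ℝ g (x + t • δ) - fderiv ℝ g x) δ
            ≤ ‖(fderiv ℝ g (x + t • δ) - fderiv ℝ g x) δ‖ := le_abs_self _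
          _ ≤ ‖fderiv ℝ g (x + t • δ) - fderiv ℝ g x‖ * ‖δ‖ :=
              ContinuousLinearMap.le_opNorm _ _
          _ ≤ σ * ‖(x + t • δ) - x‖ * ‖δ‖ := by
              exact mul_le_mul_of_nonneg_right (hlip _ _) (norm_nonneg _)
          _ = σ * (|t| * ‖δ‖) * ‖δ‖ := by rw [add_sub_cancel_left, norm_smul]; rfl
          _ = a * |t| := by rw [ha]; ring
          _ = a * t := by rw [abs_of_pos ht.out]
      linarith
  have h01 : χ 1 ≤ χ 0 := hanti (self_mem_Ici) (by norm_num : (1:ℝ) ∈ Ici (0:ℝ)) zero_le_one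
  simp only [hχ, one_smul, zero_smul, add_zero, one_mul, one_pow, zero_mul, zero_pow,
    mul_zero, sub_zero] at h01
  nlinarith [h01]

end Aux

/-- ℓ2 distribution-mismatch bound: the total variation distance between the label
distributions at `x` and its ℓ2 FGSM adversarial example `x' = x - ε ∇f(x)_y/‖∇f(x)_y‖₂`
is at least `(1/2)[ε ‖∇f(x)_y‖₂ - (σM/2) ε²]`. -/
theorem distribution_mismatch_l2 {d K : ℕ}
    (f : EuclideanSpace ℝ (Fin d) → Fin K → ℝ)
    (hprob : ∀ w, (∀ j, 0 ≤ f w j) ∧ ∑ j : Fin K, f w j = 1)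
    (hsmooth : ∀ j : Fin K, ContDiff ℝ 2 fun w => f w j)
    (y : Fin K) (σM : ℝ)
    (hHess : ∀ w, ‖iteratedFDeriv ℝ 2 (fun u => f u y) w‖ ≤ σM)
    (x : EuclideanSpace ℝ (Fin d))
    (hgrad : gradient (fun w => f w y) x ≠ 0)
    (ε : ℝ) (hε : 0 < ε) :
    (1 / 2) * (ε * ‖gradient (fun w => f w y) x‖ - σM / 2 * ε ^ 2) ≤
      (1 / 2) * ∑ j : Fin K,
        |f x j -
          f (x + (-(ε / ‖gradient (fun w => f w y) x‖)) •
            gradient (fun w => f w y) x) j| := by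
  set g : EuclideanSpace ℝ (Fin d) → ℝ := fun w => f w y with hgdef
  set G : EuclideanSpace ℝ (Fin d) := gradient g x with hG
  have hGn : ‖G‖ ≠ 0 := norm_ne_zero_iff.mpr hgrad
  have hGpos : 0 < ‖G‖ := norm_pos_iff.mpr hgrad
  set δ : EuclideanSpace ℝ (Fin d) := (-(ε / ‖G‖)) • G with hδ
  have hnδ : ‖δ‖ = ε := by
    rw [hδ, norm_smul, norm_neg, Real.norm_eq_abs, abs_of_pos (by positivity)]
    field_simp
  have hfd : fderiv ℝ g x δ = -(ε * ‖G‖) := by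
    have h1 : fderiv ℝ g x = InnerProductSpace.toDual ℝ _ G := by
      rw [hG]
      exact ((InnerProductSpace.toDual ℝ _).apply_symm_apply _).symm
    rw [h1, hδ, map_smul]
    simp only [smul_eq_mul, InnerProductSpace.toDual_apply_apply, real_inner_self_eq_norm_sq]
    field_simp
  have hkey : g (x + δ) ≤ g x + fderiv ℝ g x δ + σM * ‖δ‖ ^ 2 / 2 :=
    quad_upper_bound g (hsmooth y) σM hHess x δ
  rw [hfd, hnδ] at hkey
  have hy : ε * ‖G‖ - σM / 2 * ε ^ 2 ≤ |f x y - f (x + δ) y| := by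
    have : ε * ‖G‖ - σM / 2 * ε ^ 2 ≤ g x - g (x + δ) := by linarith
    exact this.trans (le_abs_self _)
  have hsum : |f x y - f (x + δ) y| ≤ ∑ j : Fin K, |f x j - f (x + δ) j| :=
    Finset.single_le_sum (f := fun j => |f x j - f (x + δ) j|) (fun j _ => abs_nonneg _) (Finset.mem_univ y)
  linarith
end

section
/- Let f : ℝ^d → ℝ^K be such that f(w) is a probability vector on {1,…,K} for every w and each coordinate f(·)_j is twice continuously differentiable, with ‖∇²f(w)_y‖_op ≤ σ_M for every w for a fixed class y. Let x ∈ ℝ^d with ∇f(x)_y ≠ 0, let ε > 0, and set δ = −ε ∇f(x)_y/‖∇f(x)_y‖_∞ and x' = x + δ. Then (1/2)∑_{j=1}^K |f(x)_j − f(x')_j| ≥ (1/2)[ε ‖∇f(x)_y‖_∞ − (σ_M/2) ε² d]. -/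
open Finset

/-- The ℓ∞ norm of a vector in `ℝ^d`, i.e. `max_i |v i|`. -/
noncomputable def linftyNorm {d : ℕ} (v : EuclideanSpace ℝ (Fin d)) : ℝ :=
  ‖(WithLp.equiv 2 (Fin d → ℝ)) v‖

lemma abs_coord_le_norm {d : ℕ} (v : EuclideanSpace ℝ (Fin d)) (i : Fin d) : |v i| ≤ ‖v‖ := by
  have h := EuclideanSpace.norm_eq v
  rw [h, ← Real.sqrt_sq (abs_nonneg (v i))]
  apply Real.sqrt_le_sqrt
  rw [sq_abs]
  calc v i ^ 2 = ‖v i‖ ^ 2 := by rw [Real.norm_eq_abs, sq_abs]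
    _ ≤ ∑ j, ‖v j‖ ^ 2 := Finset.single_le_sum (f := fun j => ‖v j‖ ^ 2)
        (fun j _ => sq_nonneg _) (Finset.mem_univ i)

lemma linfty_le_norm {d : ℕ} (v : EuclideanSpace ℝ (Fin d)) : linftyNorm v ≤ ‖v‖ := by
  rw [linftyNorm]
  refine pi_norm_le_iff_of_nonneg (norm_nonneg v) |>.2 fun i => ?_
  simpa [Real.norm_eq_abs] using abs_coord_le_norm v i

lemma coord_le_linfty {d : ℕ} (v : EuclideanSpace ℝ (Fin d)) (i : Fin d) :
    |v i| ≤ linftyNorm v := by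
  simpa [linftyNorm, Real.norm_eq_abs] using norm_le_pi_norm ((WithLp.equiv 2 (Fin d → ℝ)) v) i

lemma norm_sq_le_card_mul {d : ℕ} (v : EuclideanSpace ℝ (Fin d)) :
    ‖v‖ ^ 2 ≤ d * linftyNorm v ^ 2 := by
  have h := EuclideanSpace.norm_eq v
  rw [h, Real.sq_sqrt (Finset.sum_nonneg fun j _ => sq_nonneg _)]
  calc ∑ j, ‖v j‖ ^ 2 ≤ ∑ _j : Fin d, linftyNorm v ^ 2 := by
        refine Finset.sum_le_sum fun j _ => ?_
        rw [Real.norm_eq_abs]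
        exact pow_le_pow_left₀ (abs_nonneg _) (coord_le_linfty v j) 2
    _ = d * linftyNorm v ^ 2 := by simp [Finset.sum_const, nsmul_eq_mul]

lemma linfty_pos {d : ℕ} {v : EuclideanSpace ℝ (Fin d)} (hv : v ≠ 0) : 0 < linftyNorm v := by
  rw [linftyNorm, norm_pos_iff]
  simpa using hv

lemma taylor2_bound {E : Type*} [NormedAddCommGroup E] [InnerProductSpace ℝ E] [CompleteSpace E]
    (h : E → ℝ) (hs : ContDiff ℝ 2 h) {σ : ℝ}
    (hb : ∀ w, ‖iteratedFDeriv ℝ 2 h w‖ ≤ σ) (x δ : E) :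
    |h (x + δ) - h x - inner ℝ (gradient h x) δ| ≤ σ / 2 * ‖δ‖ ^ 2 := by
  have hd1 : Differentiable ℝ h := hs.differentiable two_ne_zero
  have hdi : Differentiable ℝ (iteratedFDeriv ℝ 1 h) :=
    hs.differentiable_iteratedFDeriv (by norm_num)
  have hlip : ∀ a b : E, ‖iteratedFDeriv ℝ 1 h a - iteratedFDeriv ℝ 1 h b‖ ≤ σ * ‖a - b‖ := by
    intro a b
    refine Convex.norm_image_sub_le_of_norm_fderiv_le (fun w _ => (hdi w)) ?_ convex_univ
      trivial trivial
    intro w _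
    rw [norm_fderiv_iteratedFDeriv]
    exact hb w
  have hfd : ∀ a b : E, |fderiv ℝ h a δ - fderiv ℝ h b δ| ≤ σ * ‖a - b‖ * ‖δ‖ := by
    intro a b
    have e1 : fderiv ℝ h a δ - fderiv ℝ h b δ
        = (iteratedFDeriv ℝ 1 h a - iteratedFDeriv ℝ 1 h b) (fun _ => δ) := by
      simp [iteratedFDeriv_one_apply]
    rw [e1]
    calc |(iteratedFDeriv ℝ 1 h a - iteratedFDeriv ℝ 1 h b) (fun _ => δ)|
        ≤ ‖iteratedFDeriv ℝ 1 h a - iteratedFDeriv ℝ 1 h b‖ * ∏ _i : Fin 1, ‖δ‖ :=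
          (iteratedFDeriv ℝ 1 h a - iteratedFDeriv ℝ 1 h b).le_opNorm _
      _ ≤ σ * ‖a - b‖ * ‖δ‖ := by
          simp only [Finset.prod_const, Finset.card_univ, Fintype.card_fin, pow_one]
          exact mul_le_mul_of_nonneg_right (hlip a b) (norm_nonneg δ)
  have hline : ∀ t : ℝ, HasDerivAt (fun s : ℝ => x + s • δ) δ t := by
    intro t
    simpa using ((hasDerivAt_id t).smul_const δ).const_add x
  have hφ : ∀ t : ℝ, HasDerivAt (fun s => h (x + s • δ)) (fderiv ℝ h (x + t • δ) δ) t := by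
    intro t
    exact ((hd1 _).hasFDerivAt).comp_hasDerivAt t (hline t)
  have hcont : Continuous fun t : ℝ => fderiv ℝ h (x + t • δ) δ := by
    have : Continuous (fderiv ℝ h) := (hs.fderiv_right (m := 1) (by norm_num)).continuous
    exact (this.comp (by continuity)).clm_apply continuous_const
  have hint : ∀ a b : ℝ, IntervalIntegrable (fun t => fderiv ℝ h (x + t • δ) δ)
      MeasureTheory.volume a b := fun a b => hcont.intervalIntegrable a b
  have heq : h (x + δ) - h x = ∫ t in (0:ℝ)..1, fderiv ℝ h (x + t • δ) δ := by
    have := intervalIntegral.integral_eq_sub_of_hasDerivAt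
      (f := fun s => h (x + s • δ)) (fun t _ => hφ t) (hint 0 1)
    simp at this
    rw [this]
  have hgr : (inner ℝ (gradient h x) δ : ℝ) = fderiv ℝ h x δ := by
    rw [gradient]
    exact InnerProductSpace.toDual_symm_apply
  have hsplit : h (x + δ) - h x - inner ℝ (gradient h x) δ
      = ∫ t in (0:ℝ)..1, (fderiv ℝ h (x + t • δ) δ - fderiv ℝ h x δ) := by
    rw [intervalIntegral.integral_sub (hint 0 1) (intervalIntegrable_const), heq, hgr]
    simp
  rw [hsplit]
  have hbound : ∀ t ∈ Set.Icc (0:ℝ) 1,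
      ‖fderiv ℝ h (x + t • δ) δ - fderiv ℝ h x δ‖ ≤ (σ * ‖δ‖ ^ 2) * t := by
    intro t ht
    have := hfd (x + t • δ) x
    simp only [add_sub_cancel_left, norm_smul, Real.norm_eq_abs,
      abs_of_nonneg ht.1] at this
    calc ‖fderiv ℝ h (x + t • δ) δ - fderiv ℝ h x δ‖ ≤ σ * (t * ‖δ‖) * ‖δ‖ := this
      _ = (σ * ‖δ‖ ^ 2) * t := by ring
  have hcont2 : Continuous fun t : ℝ => fderiv ℝ h (x + t • δ) δ - fderiv ℝ h x δ :=
    hcont.sub continuous_const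
  calc |∫ t in (0:ℝ)..1, (fderiv ℝ h (x + t • δ) δ - fderiv ℝ h x δ)|
      ≤ ∫ t in (0:ℝ)..1, ‖fderiv ℝ h (x + t • δ) δ - fderiv ℝ h x δ‖ :=
        intervalIntegral.abs_integral_le_integral_abs (by norm_num)
    _ ≤ ∫ t in (0:ℝ)..1, (σ * ‖δ‖ ^ 2) * t := by
        refine intervalIntegral.integral_mono_on (by norm_num)
          (hcont2.norm.intervalIntegrable 0 1)
          ((continuous_const.mul continuous_id).intervalIntegrable 0 1) ?_
        intro t ht
        exact hbound t ht
    _ = σ / 2 * ‖δ‖ ^ 2 := by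
        rw [intervalIntegral.integral_const_mul]
        simp [integral_id]
        ring

/-- ℓ∞ distribution-mismatch bound: the total variation distance between the label
distributions at `x` and its ℓ∞-normalized FGSM adversarial example
`x' = x - ε ∇f(x)_y/‖∇f(x)_y‖_∞` is at least `(1/2)[ε ‖∇f(x)_y‖_∞ - (σM/2) ε² d]`. -/
theorem distribution_mismatch_linf {d K : ℕ}
    (f : EuclideanSpace ℝ (Fin d) → Fin K → ℝ)
    (hprob : ∀ w, (∀ j, 0 ≤ f w j) ∧ ∑ j : Fin K, f w j = 1)
    (hsmooth : ∀ j : Fin K, ContDiff ℝ 2 fun w => f w j)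
    (y : Fin K) (σM : ℝ)
    (hHess : ∀ w, ‖iteratedFDeriv ℝ 2 (fun u => f u y) w‖ ≤ σM)
    (x : EuclideanSpace ℝ (Fin d))
    (hgrad : gradient (fun w => f w y) x ≠ 0)
    (ε : ℝ) (hε : 0 < ε) :
    (1 / 2) * (ε * linftyNorm (gradient (fun w => f w y) x) -
        σM / 2 * ε ^ 2 * d) ≤
      (1 / 2) * ∑ j : Fin K,
        |f x j -
          f (x + (-(ε / linftyNorm (gradient (fun w => f w y) x))) •
            gradient (fun w => f w y) x) j| := by
  set g := gradient (fun w => f w y) x with hg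
  set n := linftyNorm g with hndef
  have hn : 0 < n := linfty_pos hgrad
  set δ := (-(ε / n)) • g with hδdef
  have hσ : 0 ≤ σM := le_trans (norm_nonneg _) (hHess x)
  have hA : n ≤ ‖g‖ := linfty_le_norm g
  have hA2 : ‖g‖ ^ 2 ≤ d * n ^ 2 := norm_sq_le_card_mul g
  -- inner product value
  have hip : (inner ℝ g δ : ℝ) = -(ε / n) * ‖g‖ ^ 2 := by
    rw [hδdef, real_inner_smul_right, real_inner_self_eq_norm_sq]
  -- norm of δ squared
  have hδsq : ‖δ‖ ^ 2 ≤ ε ^ 2 * d := by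
    have h1 : ‖δ‖ ^ 2 = (ε / n) ^ 2 * ‖g‖ ^ 2 := by
      rw [hδdef, norm_smul]
      simp only [norm_neg, Real.norm_eq_abs, abs_div, mul_pow,
        abs_of_pos hε, abs_of_pos hn, div_pow]
    rw [h1]
    calc (ε / n) ^ 2 * ‖g‖ ^ 2 ≤ (ε / n) ^ 2 * (d * n ^ 2) :=
          mul_le_mul_of_nonneg_left hA2 (sq_nonneg _)
      _ = ε ^ 2 * d := by field_simp
  -- Taylor bound
  have htay := taylor2_bound (fun u => f u y) (hsmooth y) hHess x δ
  rw [← hg, hip] at htay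
  have htay' := (abs_le.mp htay).2
  -- lower bound on (ε/n) * ‖g‖^2
  have h1 : ε * n ≤ ε / n * ‖g‖ ^ 2 := by
    have : ε / n * n ^ 2 = ε * n := by field_simp
    rw [← this]
    exact mul_le_mul_of_nonneg_left (pow_le_pow_left₀ (le_of_lt hn) hA 2)
      (le_of_lt (div_pos hε hn))
  have hkey : ε * n - σM / 2 * ε ^ 2 * d ≤ f x y - f (x + δ) y := by
    have h2 : σM / 2 * ‖δ‖ ^ 2 ≤ σM / 2 * (ε ^ 2 * d) :=
      mul_le_mul_of_nonneg_left hδsq (by linarith)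
    nlinarith [htay', h1, h2]
  have habs : f x y - f (x + δ) y ≤ |f x y - f (x + δ) y| := le_abs_self _
  have hsum : |f x y - f (x + δ) y| ≤ ∑ j : Fin K, |f x j - f (x + δ) j| :=
    Finset.single_le_sum (f := fun j => |f x j - f (x + δ) j|)
      (fun j _ => abs_nonneg _) (Finset.mem_univ y)
  have : ε * n - σM / 2 * ε ^ 2 * d ≤ ∑ j : Fin K, |f x j - f (x + δ) j| := by
    linarith
  linarith
end

section
/- Let K ≥ 2, let q be a probability vector on {1,…,K}, and let j* be an index maximizing q with 1/K < q_{j*} < 1. Let z ∈ ℝ^K be logits with z_{j*} > z_j for all j ≠ j*. Then there exists a temperature T* > 0 such that (1/2)∑_{j=1}^K |σ_{T*}(z)_j − q_j| ≤ 1 − q_{j*}, and consequently, for every label y ∈ {1,…,K}, (1/2)∑_{j=1}^K |σ_{T*}(z)_j − q_j| ≤ (1/2)∑_{j=1}^K |𝟙(y)_j − q_j|. -/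
open Finset

/-- The temperature-scaled softmax: `σ_T(z)_j = exp(z_j/T) / ∑_k exp(z_k/T)`. -/
noncomputable def tempSoftmax {K : ℕ} (z : Fin K → ℝ) (T : ℝ) (j : Fin K) : ℝ :=
  Real.exp (z j / T) / ∑ k : Fin K, Real.exp (z k / T)

/-- There is a temperature `T*` at which the tempered softmax of logits `z` (whose top
prediction `j*` agrees with the top class of the true label distribution `q`) approximates
`q` in total variation at least as well as any one-hot assigned label: the total variation is
at most `1 - q_{j*}`, hence at most the total variation of any one-hot vector to `q`. -/
theorem tempSoftmax_better_than_one_hot {K : ℕ} (hK : 2 ≤ K)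
    (q : Fin K → ℝ) (hq : (∀ j, 0 ≤ q j) ∧ ∑ j : Fin K, q j = 1)
    (jstar : Fin K) (hmaxq : ∀ j : Fin K, q j ≤ q jstar)
    (hlo : 1 / (K : ℝ) < q jstar) (hhi : q jstar < 1)
    (z : Fin K → ℝ) (hmaxz : ∀ j : Fin K, j ≠ jstar → z j < z jstar) :
    ∃ Tstar : ℝ, 0 < Tstar ∧
      (1 / 2) * ∑ j : Fin K, |tempSoftmax z Tstar j - q j| ≤ 1 - q jstar ∧
      ∀ y : Fin K,
        (1 / 2) * ∑ j : Fin K, |tempSoftmax z Tstar j - q j| ≤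
          (1 / 2) * ∑ j : Fin K, |(if j = y then (1 : ℝ) else 0) - q j| := by
  obtain ⟨hq0, hq1⟩ := hq
  have hKpos : 0 < K := by omega
  set f : ℝ → ℝ := fun β => Real.exp (β * z jstar) / ∑ k : Fin K, Real.exp (β * z k) with hfdef
  have hden : ∀ β : ℝ, 0 < ∑ k : Fin K, Real.exp (β * z k) := fun β =>
    Finset.sum_pos (fun k _ => Real.exp_pos _) ⟨jstar, mem_univ _⟩
  have hcont : Continuous f := by
    apply Continuous.div
    · exact Real.continuous_exp.comp (continuous_id.mul continuous_const)
    · exact continuous_finset_sum _ fun k _ =>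
        Real.continuous_exp.comp (continuous_id.mul continuous_const)
    · intro β; exact (hden β).ne'
  have hf0 : f 0 = 1 / K := by
    simp [hfdef, Real.exp_zero]
  have hfg : ∀ β, f β = 1 / ∑ k : Fin K, Real.exp (β * (z k - z jstar)) := by
    intro β
    have h1 : ∑ k : Fin K, Real.exp (β * z k)
        = Real.exp (β * z jstar) * ∑ k : Fin K, Real.exp (β * (z k - z jstar)) := by
      rw [Finset.mul_sum]
      refine Finset.sum_congr rfl fun k _ => ?_
      rw [← Real.exp_add]; ring_nf
    rw [hfdef]
    simp only [h1]
    rw [div_mul_eq_div_div, div_self (Real.exp_pos _).ne']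
  have hg : Filter.Tendsto (fun β => ∑ k : Fin K, Real.exp (β * (z k - z jstar)))
      Filter.atTop (nhds (∑ k : Fin K, if k = jstar then (1:ℝ) else 0)) := by
    apply tendsto_finset_sum
    intro k _
    by_cases hk : k = jstar
    · simp [hk]
    · simp only [hk, if_false]
      have hc : z k - z jstar < 0 := sub_neg.mpr (hmaxz k hk)
      have h1 : Filter.Tendsto (fun β : ℝ => β * (z k - z jstar)) Filter.atTop Filter.atBot :=
        Filter.Tendsto.atTop_mul_const_of_neg hc Filter.tendsto_id
      exact Real.tendsto_exp_atBot.comp h1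
  have hsum1 : (∑ k : Fin K, if k = jstar then (1:ℝ) else 0) = 1 := by simp
  rw [hsum1] at hg
  have hlim : Filter.Tendsto f Filter.atTop (nhds 1) := by
    have hfg' : f = fun β => 1 / ∑ k : Fin K, Real.exp (β * (z k - z jstar)) := funext hfg
    rw [hfg']
    simp only [one_div]
    simpa using hg.inv₀ one_ne_zero
  have hev : ∀ᶠ β in Filter.atTop, q jstar < f β :=
    hlim.eventually (eventually_gt_nhds hhi)
  obtain ⟨B, hB1, hB2⟩ := (hev.and (Filter.eventually_ge_atTop (1:ℝ))).exists
  have hB0 : (0:ℝ) ≤ B := le_trans zero_le_one hB2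
  have hmem : q jstar ∈ Set.Icc (f 0) (f B) := by
    constructor
    · rw [hf0]; exact hlo.le
    · exact hB1.le
  obtain ⟨β, hβmem, hβeq⟩ := intermediate_value_Icc hB0 hcont.continuousOn hmem
  have hβpos : 0 < β := by
    rcases lt_or_eq_of_le hβmem.1 with h | h
    · exact h
    · exfalso; rw [← h, hf0] at hβeq; linarith
  refine ⟨β⁻¹, inv_pos.mpr hβpos, ?_⟩
  have hσ : ∀ j, tempSoftmax z β⁻¹ j = Real.exp (β * z j) / ∑ k : Fin K, Real.exp (β * z k) := by
    intro j
    have hzb : ∀ w : ℝ, w / β⁻¹ = β * w := fun w => by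
      field_simp
    simp only [tempSoftmax, hzb]
  set σ : Fin K → ℝ := fun j => tempSoftmax z β⁻¹ j with hσdef
  have hσstar : σ jstar = q jstar := by rw [hσdef]; simp only [hσ]; exact hβeq
  have hσ0 : ∀ j, 0 ≤ σ j := fun j => by
    rw [hσdef]; simp only [hσ]; positivity
  have hσ1 : ∑ j : Fin K, σ j = 1 := by
    simp only [hσdef, hσ, ← Finset.sum_div]
    exact div_self (hden β).ne'
  have key : ∑ j : Fin K, |σ j - q j| ≤ 2 * (1 - q jstar) := by
    rw [← Finset.sum_erase_add _ _ (mem_univ jstar)]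
    have h1 : |σ jstar - q jstar| = 0 := by rw [hσstar]; simp
    rw [h1, add_zero]
    have h2 : ∑ j ∈ univ.erase jstar, |σ j - q j| ≤ ∑ j ∈ univ.erase jstar, (σ j + q j) := by
      refine Finset.sum_le_sum fun j _ => ?_
      calc |σ j - q j| ≤ |σ j| + |q j| := abs_sub _ _
        _ = σ j + q j := by rw [abs_of_nonneg (hσ0 j), abs_of_nonneg (hq0 j)]
    have h3 : ∑ j ∈ univ.erase jstar, (σ j + q j) = 2 * (1 - q jstar) := by
      rw [Finset.sum_add_distrib]
      have hs : ∑ j ∈ univ.erase jstar, σ j = 1 - q jstar := by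
        have := Finset.sum_erase_add univ σ (mem_univ jstar)
        rw [hσ1] at *; rw [hσstar] at this; linarith
      have hqs : ∑ j ∈ univ.erase jstar, q j = 1 - q jstar := by
        have := Finset.sum_erase_add univ q (mem_univ jstar)
        rw [hq1] at this; linarith
      rw [hs, hqs]; ring
    linarith
  constructor
  · linarith
  · intro y
    have hqy1 : q y ≤ 1 := le_of_lt (lt_of_le_of_lt (hmaxq y) hhi)
    have honehot : ∑ j : Fin K, |(if j = y then (1 : ℝ) else 0) - q j| = 2 * (1 - q y) := by
      rw [← Finset.sum_erase_add _ _ (mem_univ y)]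
      have h1 : |(if y = y then (1:ℝ) else 0) - q y| = 1 - q y := by
        simp [abs_of_nonneg (by linarith : (0:ℝ) ≤ 1 - q y)]
      have h2 : ∑ j ∈ univ.erase y, |(if j = y then (1:ℝ) else 0) - q j|
          = ∑ j ∈ univ.erase y, q j := by
        refine Finset.sum_congr rfl fun j hj => ?_
        rw [if_neg (Finset.ne_of_mem_erase hj)]
        simp [abs_of_nonneg (hq0 j)]
      have hqs : ∑ j ∈ univ.erase y, q j = 1 - q y := by
        have := Finset.sum_erase_add univ q (mem_univ y)
        rw [hq1] at this; linarith
      rw [h1, h2, hqs]; ring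
    rw [honehot]
    have : 1 - q jstar ≤ 1 - q y := by have := hmaxq y; linarith
    linarith
end

section
/- Let p and q be probability vectors on {1,…,K}, let j* be an index with p_{j*} ≤ q_{j*} and p_{j*} < 1, and set λ = (1 − q_{j*})/(1 − p_{j*}), so that λ ∈ [0,1] and λ p_{j*} + (1 − λ) = q_{j*}. Then interpolation with the one-hot vector at j* does not increase the total variation distance to q: (1/2)∑_{j=1}^K |λ p_j + (1 − λ) 𝟙(j*)_j − q_j| ≤ (1/2)∑_{j=1}^K |p_j − q_j|. -/
open Finset

/-- Interpolation with the assigned one-hot label does not increase the total variation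
distance to the true label distribution: if `p_{j*} ≤ q_{j*}` and `p_{j*} < 1`, then for
`λ = (1 - q_{j*})/(1 - p_{j*})` the rectified distribution `λ p + (1-λ) 𝟙(j*)` is at least
as close to `q` in total variation as `p` is. -/
theorem interpolation_tv_le {K : ℕ} (p q : Fin K → ℝ)
    (hp : (∀ j, 0 ≤ p j) ∧ ∑ j : Fin K, p j = 1)
    (hq : (∀ j, 0 ≤ q j) ∧ ∑ j : Fin K, q j = 1)
    (jstar : Fin K) (hle : p jstar ≤ q jstar) (hlt : p jstar < 1) :
    (1 / 2) * ∑ j : Fin K,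
        |(1 - q jstar) / (1 - p jstar) * p j +
          (1 - (1 - q jstar) / (1 - p jstar)) * (if j = jstar then (1 : ℝ) else 0) -
          q j| ≤
      (1 / 2) * ∑ j : Fin K, |p j - q j| := by
  obtain ⟨hp0, hp1⟩ := hp
  obtain ⟨hq0, hq1⟩ := hq
  set l := (1 - q jstar) / (1 - p jstar) with hl
  have hpa : (0:ℝ) < 1 - p jstar := by linarith
  have hqle : q jstar ≤ 1 := by
    calc q jstar ≤ ∑ j, q j := Finset.single_le_sum (fun j _ => hq0 j) (mem_univ jstar)
      _ = 1 := hq1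
  have hl0 : 0 ≤ l := div_nonneg (by linarith) hpa.le
  have hl1 : l ≤ 1 := by rw [hl, div_le_one hpa]; linarith
  have hkey : l * (1 - p jstar) = 1 - q jstar := by
    rw [hl]; field_simp
  have hsum_p : ∑ j ∈ univ.erase jstar, p j = 1 - p jstar := by
    have h := Finset.sum_erase_add univ p (mem_univ jstar)
    rw [hp1] at h
    linarith
  rw [← Finset.sum_erase_add univ _ (mem_univ jstar),
    ← Finset.sum_erase_add univ (fun j => |p j - q j|) (mem_univ jstar)]
  have hterm : |l * p jstar + (1 - l) * (if jstar = jstar then (1:ℝ) else 0) - q jstar| = 0 := by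
    rw [if_pos rfl, abs_eq_zero]
    ring_nf
    ring_nf at hkey
    linarith
  have hbound : ∑ j ∈ univ.erase jstar,
      |l * p j + (1 - l) * (if j = jstar then (1:ℝ) else 0) - q j|
      ≤ ∑ j ∈ univ.erase jstar, (|p j - q j| + (1 - l) * p j) := by
    apply Finset.sum_le_sum
    intro j hj
    rw [if_neg (Finset.mem_erase.mp hj).1, mul_zero, add_zero]
    have h1 : l * p j - q j = (p j - q j) - (1 - l) * p j := by ring
    rw [h1]
    refine le_trans (abs_sub _ _) ?_
    rw [abs_of_nonneg (mul_nonneg (by linarith) (hp0 j))]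
  rw [Finset.sum_add_distrib, ← Finset.mul_sum, hsum_p] at hbound
  have hstar : (1 - l) * (1 - p jstar) = q jstar - p jstar := by
    ring_nf; ring_nf at hkey; linarith
  have habs : |p jstar - q jstar| = q jstar - p jstar := by
    rw [abs_sub_comm, abs_of_nonneg (by linarith)]
  rw [hterm, add_zero, habs]
  linarith [hbound]
end
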